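/- arXiv:1711.07391 — 7 statements merged into one kernel-verified Lean document; each statement's English description precedes it below -/
import Mathlib

section
/- Let R be a commutative ring and t ∈ R. Let P be a type with a degree map deg : P → ℕ such that deg x ≥ 1 for all x and {x : P | deg x = d} is finite for every d. Then: (i) for every s ≥ 0 the set Ξ_s of finitely supported functions m : P → ℕ with Σ_x m(x)·deg(x) = s is finite; and (ii) setting ξ_s := Σ_{m ∈ Ξ_s} Π_{x ∈ supp(m)} (1 − t^{deg x}) (so ξ_0 = 1), for every N ≥ 0 one has the congruence of formal power series in R⟦z⟧: (Σ_{s=0}^{N} ξ_s z^s) · Π_{x : deg x ≤ N} (1 − z^{deg x}) ≡ Π_{x : deg x ≤ N} (1 − t^{deg x} z^{deg x}) (mod z^{N+1}), where the products run over the finite set {x : deg x ≤ N}. -/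
open PowerSeries

/-- Per-point generating series: `1 + (1-t^d)(z^d + z^{2d} + ...)`. -/
private noncomputable def xiAuxF {R : Type*} [CommRing R] (t : R) (d : ℕ) : R⟦X⟧ :=
  PowerSeries.mk fun n => if n = 0 then 1 else if d ∣ n then 1 - t ^ d else 0

private lemma xiAuxF_mul {R : Type*} [CommRing R] (t : R) {d : ℕ} (hd : 1 ≤ d) :
    xiAuxF t d * (1 - X ^ d) = 1 - C (t ^ d) * X ^ d := by
  ext n
  rw [mul_sub, mul_one, map_sub, map_sub, coeff_mul_X_pow', coeff_C_mul_X_pow]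
  simp only [xiAuxF, coeff_mk, coeff_one]
  by_cases h0 : n = 0
  · subst h0
    have : ¬ d ≤ 0 := by omega
    simp [this, (show ¬ (0 = d) by omega)]
  · by_cases hdn : d ≤ n
    · by_cases he : n = d
      · subst he
        simp only [Nat.dvd_refl, h0, if_false, if_neg h0, Nat.sub_self, if_pos rfl, le_refl,
          if_true]
        ring
      · have h1 : n - d ≠ 0 := by omega
        have h2 : d ∣ n ↔ d ∣ n - d := by
          constructor
          · intro h; exact Nat.dvd_sub h dvd_rfl
          · intro h
            have : n = (n - d) + d := by omega
            rw [this]; exact Nat.dvd_add h dvd_rfl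
        by_cases hdvd : d ∣ n
        · simp [h0, hdn, h1, hdvd, h2.mp hdvd, he]
        · have h3 : ¬ d ∣ n - d := fun h => hdvd (h2.mpr h)
          simp [h0, hdn, h1, hdvd, h3, he]
    · have hnd : ¬ d ∣ n := fun h => hdn (Nat.le_of_dvd (Nat.pos_of_ne_zero h0) h)
      have : n ≠ d := by omega
      simp [h0, hdn, hnd, this]

/-- `m ↦ (x ↦ m x * deg x)`. -/
private noncomputable def xiAuxL {P : Type*} (deg : P → ℕ) (m : P →₀ ℕ) : P →₀ ℕ :=
  Finsupp.onFinset m.support (fun x => m x * deg x)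
    (fun x h => Finsupp.mem_support_iff.2 (by intro h0; simp [h0] at h))

/-- `l ↦ (x ↦ l x / deg x)`. -/
private noncomputable def xiAuxM {P : Type*} (deg : P → ℕ) (l : P →₀ ℕ) : P →₀ ℕ :=
  Finsupp.onFinset l.support (fun x => l x / deg x)
    (fun x h => Finsupp.mem_support_iff.2 (by intro h0; simp [h0] at h))

private lemma xiAuxL_apply {P : Type*} (deg : P → ℕ) (m : P →₀ ℕ) (x : P) :
    xiAuxL deg m x = m x * deg x := rfl

private lemma xiAuxM_apply {P : Type*} (deg : P → ℕ) (l : P →₀ ℕ) (x : P) :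
    xiAuxM deg l x = l x / deg x := rfl

private lemma xiAux_supp_sub {P : Type*} (deg : P → ℕ) (hdeg : ∀ x, 1 ≤ deg x)
    {S : Finset P} {k : ℕ} (hS : ∀ x, deg x ≤ k → x ∈ S) {m : P →₀ ℕ}
    (hm : (m.sum fun x k => k * deg x) = k) : m.support ⊆ S := by
  intro x hx
  apply hS
  have hx' : 1 ≤ m x := Nat.one_le_iff_ne_zero.2 (Finsupp.mem_support_iff.1 hx)
  calc deg x ≤ m x * deg x := Nat.le_mul_of_pos_left _ hx'
    _ ≤ m.sum fun x k => k * deg x :=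
        Finset.single_le_sum (f := fun x => m x * deg x) (fun _ _ => Nat.zero_le _) hx
    _ = k := hm

private lemma xiAuxL_mem {P : Type*} [DecidableEq P] (deg : P → ℕ) (hdeg : ∀ x, 1 ≤ deg x)
    {S : Finset P} {k : ℕ} (hS : ∀ x, deg x ≤ k → x ∈ S) {m : P →₀ ℕ}
    (hm : (m.sum fun x k => k * deg x) = k) :
    xiAuxL deg m ∈ Finset.finsuppAntidiag S k := by
  have hsub : m.support ⊆ S := xiAux_supp_sub deg hdeg hS hm
  rw [Finset.mem_finsuppAntidiag]
  constructor
  · rw [← hm]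
    rw [show S.sum (xiAuxL deg m) = ∑ x ∈ S, m x * deg x from rfl]
    rw [Finsupp.sum]
    exact (Finset.sum_subset hsub (fun x _ hx => by
      simp [Finsupp.notMem_support_iff.1 hx])).symm
  · exact (Finsupp.support_onFinset_subset).trans hsub

private lemma xiAux_coeff_prod {R : Type*} [CommRing R] (t : R) {P : Type*} [DecidableEq P]
    (deg : P → ℕ) (hdeg : ∀ x, 1 ≤ deg x) (S : Finset P) (k : ℕ)
    (hS : ∀ x, deg x ≤ k → x ∈ S)
    (Ξ : Finset (P →₀ ℕ)) (hΞ : ∀ m, m ∈ Ξ ↔ (m.sum fun x k => k * deg x) = k) :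
    (∑ m ∈ Ξ, ∏ x ∈ m.support, (1 - t ^ deg x)) =
      coeff k (∏ x ∈ S, xiAuxF t (deg x)) := by
  classical
  rw [coeff_prod]
  have hfilter : ∑ l ∈ (Finset.finsuppAntidiag S k).filter
        (fun l : P →₀ ℕ => ∀ x ∈ l.support, deg x ∣ l x),
        ∏ x ∈ S, coeff (l x) (xiAuxF t (deg x)) =
      ∑ l ∈ Finset.finsuppAntidiag S k, ∏ x ∈ S, coeff (l x) (xiAuxF t (deg x)) := by
    refine Finset.sum_filter_of_ne fun l hl hne => ?_
    rw [Finset.mem_finsuppAntidiag] at hl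
    intro x hx
    by_contra hdvd
    apply hne
    apply Finset.prod_eq_zero (hl.2 hx)
    have h0 : l x ≠ 0 := Finsupp.mem_support_iff.1 hx
    simp [xiAuxF, coeff_mk, h0, hdvd]
  rw [← hfilter]
  refine Finset.sum_nbij' (xiAuxL deg) (xiAuxM deg) ?_ ?_ ?_ ?_ ?_
  · -- maps into filtered antidiagonal
    intro m hm
    rw [Finset.mem_filter]
    refine ⟨xiAuxL_mem deg hdeg hS ((hΞ m).1 hm), fun x _ => ?_⟩
    rw [xiAuxL_apply]
    exact dvd_mul_left _ _
  · -- reverse map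
    intro l hl
    rw [Finset.mem_filter] at hl
    obtain ⟨hl1, hl2⟩ := hl
    rw [Finset.mem_finsuppAntidiag] at hl1
    rw [hΞ]
    rw [xiAuxM, Finsupp.onFinset_sum _ (fun a => by simp)]
    calc ∑ x ∈ l.support, (l x / deg x) * deg x
        = ∑ x ∈ l.support, l x :=
          Finset.sum_congr rfl fun x hx => Nat.div_mul_cancel (hl2 x hx)
      _ = S.sum l := Finset.sum_subset hl1.2 (fun x _ hx => Finsupp.notMem_support_iff.1 hx)
      _ = k := hl1.1
  · -- left inverse
    intro m _
    ext x
    rw [xiAuxM_apply, xiAuxL_apply]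
    exact Nat.mul_div_cancel _ (hdeg x)
  · -- right inverse
    intro l hl
    rw [Finset.mem_filter] at hl
    ext x
    rw [xiAuxL_apply, xiAuxM_apply]
    by_cases h0 : l x = 0
    · simp [h0]
    · exact Nat.div_mul_cancel (hl.2 x (Finsupp.mem_support_iff.2 h0))
  · -- values agree
    intro m hm
    have hm' := (hΞ m).1 hm
    have hsub : m.support ⊆ S := xiAux_supp_sub deg hdeg hS hm'
    rw [← Finset.prod_subset hsub (fun x _ hx => ?_)]
    · refine Finset.prod_congr rfl fun x hx => ?_
      have h1 : 1 ≤ m x := Nat.one_le_iff_ne_zero.2 (Finsupp.mem_support_iff.1 hx)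
      have h2 : m x * deg x ≠ 0 := by
        have := hdeg x; positivity
      rw [xiAuxL_apply]
      simp [xiAuxF, coeff_mk, h2, Dvd.intro _ rfl]
    · rw [xiAuxL_apply, Finsupp.notMem_support_iff.1 hx]
      simp [xiAuxF, coeff_mk]

open PowerSeries in
/-- let `R` be a commutative ring, `t ∈ R`, and `P` a type with a degree map
`deg : P → ℕ` with `deg x ≥ 1` and finite fibres.  Then (i) for every `s` the set `Ξ_s` of
finitely supported `m : P →₀ ℕ` with `Σ_x m(x)·deg(x) = s` is finite, and (ii) with
`ξ_s := Σ_{m ∈ Ξ_s} Π_{x ∈ supp m} (1 − t^{deg x})`, for every `N` one has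
`(Σ_{s≤N} ξ_s z^s) · Π_{deg x ≤ N} (1 − z^{deg x}) ≡ Π_{deg x ≤ N} (1 − t^{deg x} z^{deg x})
(mod z^{N+1})` in `R⟦z⟧`. -/
theorem xi_zeta_identity {R : Type*} [CommRing R] (t : R) {P : Type*} (deg : P → ℕ)
    (hdeg : ∀ x : P, 1 ≤ deg x) (hfib : ∀ d : ℕ, {x : P | deg x = d}.Finite) :
    (∀ s : ℕ, {m : P →₀ ℕ | (m.sum fun x k => k * deg x) = s}.Finite) ∧
    (∀ (hΞ : ∀ s : ℕ, {m : P →₀ ℕ | (m.sum fun x k => k * deg x) = s}.Finite)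
      (N : ℕ) (hN : {x : P | deg x ≤ N}.Finite), ∀ k ≤ N,
      (coeff (R := R) k)
        ((∑ s ∈ Finset.range (N + 1),
            C (R := R) (∑ m ∈ (hΞ s).toFinset, ∏ x ∈ m.support, (1 - t ^ deg x)) * X ^ s) *
          ∏ x ∈ hN.toFinset, (1 - (X : R⟦X⟧) ^ deg x)) =
      (coeff (R := R) k)
        (∏ x ∈ hN.toFinset, (1 - C (R := R) (t ^ deg x) * (X : R⟦X⟧) ^ deg x))) := by
  classical
  have hSfin : ∀ s : ℕ, {x : P | deg x ≤ s}.Finite := by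
    intro s
    have hsub : {x : P | deg x ≤ s} ⊆ ⋃ d ∈ Finset.range (s + 1), {x : P | deg x = d} := by
      intro x hx
      simp only [Set.mem_setOf_eq] at hx
      simp only [Set.mem_iUnion, Finset.mem_range, Set.mem_setOf_eq]
      exact ⟨deg x, by omega, rfl⟩
    exact (Set.Finite.biUnion (Finset.finite_toSet _) (fun d _ => hfib d)).subset hsub
  have hfin : ∀ s : ℕ, {m : P →₀ ℕ | (m.sum fun x k => k * deg x) = s}.Finite := by
    intro s
    apply Set.Finite.of_finite_image (f := xiAuxL deg)
    · apply Set.Finite.subset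
        (Finset.finite_toSet (Finset.finsuppAntidiag (hSfin s).toFinset s))
      rintro _ ⟨m, hm, rfl⟩
      simp only [Finset.mem_coe]
      exact xiAuxL_mem deg hdeg (fun x hx => (hSfin s).mem_toFinset.2 hx) hm
    · intro m1 _ m2 _ h
      ext x
      have := DFunLike.congr_fun h x
      rw [xiAuxL_apply, xiAuxL_apply] at this
      exact Nat.eq_of_mul_eq_mul_right (hdeg x) this
  refine ⟨hfin, ?_⟩
  intro hΞ N hN k hk
  set S : Finset P := hN.toFinset with hSdef
  have hS : ∀ x, deg x ≤ N → x ∈ S := fun x hx => hN.mem_toFinset.2 hx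
  have key : (∏ x ∈ S, xiAuxF t (deg x)) * (∏ x ∈ S, (1 - (X : R⟦X⟧) ^ deg x)) =
      ∏ x ∈ S, (1 - C (t ^ deg x) * (X : R⟦X⟧) ^ deg x) := by
    rw [← Finset.prod_mul_distrib]
    exact Finset.prod_congr rfl fun x _ => xiAuxF_mul t (hdeg x)
  rw [← key, coeff_mul, coeff_mul]
  refine Finset.sum_congr rfl fun p hp => ?_
  rw [Finset.HasAntidiagonal.mem_antidiagonal] at hp
  have hp1 : p.1 ≤ N := le_trans (by omega) hk
  congr 1
  -- coeff p.1 of the polynomial part equals coeff p.1 of ∏ xiAuxF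
  rw [map_sum]
  rw [Finset.sum_eq_single_of_mem p.1 (Finset.mem_range.2 (by omega))
    (fun s _ hs => by rw [coeff_C_mul_X_pow, if_neg (fun h => hs h.symm)])]
  rw [coeff_C_mul_X_pow, if_pos rfl]
  exact xiAux_coeff_prod t deg hdeg S p.1 (fun x hx => hS x (le_trans hx hp1))
    (hΞ p.1).toFinset (fun m => (hΞ p.1).mem_toFinset)
end

section
/- Let R be a commutative ring and t ∈ R. Let P be a type with a degree map deg : P → ℕ such that deg x ≥ 1 for all x and {x : P | deg x = d} is finite for every d, and let p ∈ P be a distinguished point with deg p = 1. For s ≥ 0 let ξ_s := Σ_m Π_{x ∈ supp(m)} (1 − t^{deg x}), the sum over finitely supported m : P → ℕ with Σ_x m(x)·deg(x) = s, and let ξ_s° be the analogous sum restricted to those m with m(p) = 0. Then ξ_0 = ξ_0° = 1, and for every s ≥ 1 one has ξ_s − ξ_{s−1} = ξ_s° − t·ξ_{s−1}° (equivalently, ξ_s° + (1 − t)·Σ_{β=0}^{s−1} ξ_β° = ξ_s; equivalently, (Σ_s ξ_s° z^s)(1 − t z) = (Σ_s ξ_s z^s)(1 − z) in R⟦z⟦).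 -/
/-- let `R` be a commutative ring, `t ∈ R`, `P` a type with degree map
`deg : P → ℕ` with `deg x ≥ 1` and finite fibres, and `p ∈ P` with `deg p = 1`.  With
`ξ_s := Σ_m Π_{x ∈ supp m} (1 − t^{deg x})` (sum over finitely supported `m` with
`Σ m(x)·deg x = s`) and `ξ°_s` the analogous sum restricted to `m` with `m p = 0`,
one has `ξ_0 = ξ°_0 = 1` and `ξ_s − ξ_{s−1} = ξ°_s − t·ξ°_{s−1}` for all `s ≥ 1`. -/
theorem xi_circ_identity {R : Type*} [CommRing R] (t : R) {P : Type*} (deg : P → ℕ)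
    (hdeg : ∀ x : P, 1 ≤ deg x) (hfib : ∀ d : ℕ, {x : P | deg x = d}.Finite)
    (p : P) (hp : deg p = 1)
    (hΞ : ∀ s : ℕ, {m : P →₀ ℕ | (m.sum fun x k => k * deg x) = s}.Finite)
    (hΞ' : ∀ s : ℕ, {m : P →₀ ℕ | m p = 0 ∧ (m.sum fun x k => k * deg x) = s}.Finite)
    (ξ ξ' : ℕ → R)
    (hξ : ∀ s : ℕ, ξ s = ∑ m ∈ (hΞ s).toFinset, ∏ x ∈ m.support, (1 - t ^ deg x))
    (hξ' : ∀ s : ℕ, ξ' s = ∑ m ∈ (hΞ' s).toFinset, ∏ x ∈ m.support, (1 - t ^ deg x)) :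
    ξ 0 = 1 ∧ ξ' 0 = 1 ∧ ∀ s : ℕ, 1 ≤ s → ξ s - ξ (s - 1) = ξ' s - t * ξ' (s - 1) := by
  classical
  set w : (P →₀ ℕ) → ℕ := fun m => m.sum fun x k => k * deg x with hwdef
  have hw_add : ∀ a b : P →₀ ℕ, w (a + b) = w a + w b := by
    intro a b
    exact Finsupp.sum_add_index' (fun x => by simp) (fun x k₁ k₂ => add_mul k₁ k₂ (deg x))
  have hw_single : ∀ k : ℕ, w (Finsupp.single p k) = k := by
    intro k
    simp [hwdef, Finsupp.sum_single_index, hp]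
  have hw0 : ∀ m : P →₀ ℕ, w m = 0 → m = 0 := by
    intro m hm
    by_contra hne
    obtain ⟨x, hx⟩ := Finsupp.ne_iff.mp hne
    have hx0 : m x ≠ 0 := by simpa using hx
    have hxs : x ∈ m.support := Finsupp.mem_support_iff.mpr hx0
    have h0 := (Finset.sum_eq_zero_iff).mp hm x hxs
    simp only at h0
    have hd := hdeg x
    rcases Nat.mul_eq_zero.mp h0 with h | h
    · exact hx0 h
    · omega
  have hξ0 : ξ 0 = 1 := by
    rw [hξ 0]
    have : (hΞ 0).toFinset = {0} := by
      ext m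
      simp only [Set.Finite.mem_toFinset, Set.mem_setOf_eq, Finset.mem_singleton]
      constructor
      · intro h; exact hw0 m h
      · rintro rfl; simp
    rw [this]
    simp
  have hξ'0 : ξ' 0 = 1 := by
    rw [hξ' 0]
    have : (hΞ' 0).toFinset = {0} := by
      ext m
      simp only [Set.Finite.mem_toFinset, Set.mem_setOf_eq, Finset.mem_singleton]
      constructor
      · rintro ⟨-, h⟩; exact hw0 m h
      · rintro rfl; simp
    rw [this]
    simp
  -- key decomposition
  have key : ∀ s : ℕ, ξ s = ξ' s + (1 - t) * ∑ β ∈ Finset.range s, ξ' β := by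
    intro s
    have hmaps : ∀ m ∈ (hΞ s).toFinset, m p ∈ Finset.range (s + 1) := by
      intro m hm
      rw [Set.Finite.mem_toFinset, Set.mem_setOf_eq] at hm
      rw [Finset.mem_range, Nat.lt_succ_iff]
      rcases Nat.eq_zero_or_pos (m p) with h | h
      · omega
      · have hps : p ∈ m.support := Finsupp.mem_support_iff.mpr (by omega)
        have := Finset.single_le_sum (f := fun x => m x * deg x)
          (fun i _ => Nat.zero_le _) hps
        calc m p = m p * deg p := by rw [hp, mul_one]
          _ ≤ m.sum fun x k => k * deg x := this
          _ = s := hm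
    have hsplit := Finset.sum_fiberwise_of_maps_to hmaps
      (fun m => ∏ x ∈ m.support, (1 - t ^ deg x))
    rw [hξ s, ← hsplit]
    have inner : ∀ k ∈ Finset.range (s + 1),
        (∑ m ∈ (hΞ s).toFinset.filter (fun m => m p = k),
          ∏ x ∈ m.support, (1 - t ^ deg x))
        = (if k = 0 then (1 : R) else 1 - t) * ξ' (s - k) := by
      intro k hk
      rw [Finset.mem_range, Nat.lt_succ_iff] at hk
      rw [hξ' (s - k), Finset.mul_sum]
      refine Finset.sum_nbij' (fun m => m.erase p) (fun m' => m' + Finsupp.single p k)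
        ?_ ?_ ?_ ?_ ?_
      · intro m hm
        rw [Finset.mem_filter, Set.Finite.mem_toFinset, Set.mem_setOf_eq] at hm
        obtain ⟨hws, hmp⟩ := hm
        rw [Set.Finite.mem_toFinset, Set.mem_setOf_eq]
        constructor
        · simp [Finsupp.erase_same]
        · have hrec : m.erase p + Finsupp.single p k = m := by
            rw [← hmp]; exact Finsupp.erase_add_single p m
          have h1 : w (m.erase p) + k = s := by
            rw [← hw_single k, ← hw_add, hrec]; exact hws
          have h2 : ((m.erase p).sum fun x k => k * deg x) + k = s := h1
          show ((m.erase p).sum fun x k => k * deg x) = s - k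
          omega
      · intro m' hm'
        rw [Set.Finite.mem_toFinset, Set.mem_setOf_eq] at hm'
        obtain ⟨hm'p, hwm'⟩ := hm'
        rw [Finset.mem_filter, Set.Finite.mem_toFinset, Set.mem_setOf_eq]
        constructor
        · show w (m' + Finsupp.single p k) = s
          rw [hw_add, hw_single]
          have : w m' = s - k := hwm'
          omega
        · simp [Finsupp.add_apply, hm'p, Finsupp.single_apply]
      · intro m hm
        rw [Finset.mem_filter, Set.Finite.mem_toFinset, Set.mem_setOf_eq] at hm
        rw [← hm.2]
        exact Finsupp.erase_add_single p m
      · intro m' hm'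
        rw [Set.Finite.mem_toFinset, Set.mem_setOf_eq] at hm'
        show Finsupp.erase p (m' + Finsupp.single p k) = m'
        rw [Finsupp.erase_add, Finsupp.erase_single, add_zero]
        ext x
        rw [Finsupp.erase_apply]
        split_ifs with h
        · subst h; exact hm'.1.symm
        · rfl
      · intro m hm
        rw [Finset.mem_filter, Set.Finite.mem_toFinset, Set.mem_setOf_eq] at hm
        obtain ⟨hws, hmp⟩ := hm
        show _ = (if k = 0 then (1:R) else 1 - t) * ∏ x ∈ (m.erase p).support, (1 - t ^ deg x)
        by_cases hk0 : k = 0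
        · subst hk0
          have : m.erase p = m := by
            ext x
            rw [Finsupp.erase_apply]
            split_ifs with h
            · subst h; exact hmp.symm
            · rfl
          rw [if_pos rfl, this, one_mul]
        · have hpm : p ∈ m.support := Finsupp.mem_support_iff.mpr (by rw [hmp]; exact hk0)
          rw [if_neg hk0, Finsupp.support_erase,
            ← Finset.mul_prod_erase m.support _ hpm, hp, pow_one]
    rw [Finset.sum_congr rfl inner, Finset.sum_range_succ']
    rw [if_pos rfl, one_mul, Nat.sub_zero]
    have h2 : ∀ k ∈ Finset.range s,
        (if k + 1 = 0 then (1 : R) else 1 - t) * ξ' (s - (k + 1))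
        = (1 - t) * ξ' (s - 1 - k) := by
      intro k hk
      rw [if_neg (Nat.succ_ne_zero k)]
      congr 2
      omega
    rw [Finset.sum_congr rfl h2, ← Finset.mul_sum, Finset.sum_range_reflect]
    ring
  refine ⟨hξ0, hξ'0, fun s hs => ?_⟩
  obtain ⟨n, rfl⟩ : ∃ n, s = n + 1 := ⟨s - 1, by omega⟩
  simp only [Nat.add_sub_cancel]
  rw [key (n + 1), key n, Finset.sum_range_succ]
  ring
end

section
/- Fix integers g (a genus), n ≥ 1 and k ≥ 1, and set m = k·n. For d, e : Fin n → ℤ define the cyclic Euler pairing ⟨d,e⟩_n := Σ_{i=0}^{n−1} d_i·(e_i − e_{(i+1) mod n}), and for r, s ∈ ℤ define the Euler form ⟨(r,d),(s,e)⟩_n := r·s·(1−g) + r·e₀ − d_{n−1}·s + ⟨d,e⟩_n. Define the refinement map Φ : (Fin n → ℤ) → (Fin m → ℤ) by (Φd)_j = d_{⌊j/k⌋} for 0 ≤ j < m (each entry repeated k times in order). Then for all r, s ∈ ℤ and d, e : Fin n → ℤ one has ⟨(r, Φd),(s, Φe)⟩_m = ⟨(r,d),(s,e)⟩_n. -/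
/-- The cyclic Euler pairing `⟨d,e⟩_n = Σ_{i} d_i·(e_i − e_{(i+1) mod n})` on `Fin n → ℤ`. -/
def cyclicPairing (n : ℕ) [NeZero n] (d e : Fin n → ℤ) : ℤ :=
  ∑ i : Fin n, d i * (e i - e (i + 1))

/-- The Euler form `⟨(r,d),(s,e)⟩_n = r·s·(1−g) + r·e₀ − d_{n−1}·s + ⟨d,e⟩_n` of a genus-`g`
curve with an `n`-th root stack point. -/
def eulerForm (g : ℤ) (n : ℕ) [NeZero n] (r s : ℤ) (d e : Fin n → ℤ) : ℤ :=
  r * s * (1 - g) + r * e 0 -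
    d ⟨n - 1, Nat.sub_lt (Nat.pos_of_ne_zero (NeZero.ne n)) Nat.one_pos⟩ * s +
    cyclicPairing n d e

/-- The refinement map `Φ : (Fin n → ℤ) → (Fin m → ℤ)`, `(Φ d)_j = d_{⌊j/k⌋}` for `m = k·n`
(each entry repeated `k` times in order). -/
def refineMap (n k : ℕ) [NeZero k] (d : Fin n → ℤ) : Fin (k * n) → ℤ :=
  fun j => d ⟨(j : ℕ) / k, Nat.div_lt_of_lt_mul j.isLt⟩

lemma val_add_one_mod (m : ℕ) [NeZero m] (j : Fin m) :
    ((j + 1 : Fin m) : ℕ) = (j.val + 1) % m := by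
  rw [Fin.val_add, Fin.val_one']
  conv_rhs => rw [Nat.add_mod j.val 1 m, Nat.mod_eq_of_lt j.isLt]

lemma cyclicPairing_refine (n k : ℕ) [NeZero n] [NeZero k] [NeZero (k * n)] (d e : Fin n → ℤ) :
    cyclicPairing (k * n) (refineMap n k d) (refineMap n k e) = cyclicPairing n d e := by
  have hk : 0 < k := Nat.pos_of_ne_zero (NeZero.ne k)
  have hn : 0 < n := Nat.pos_of_ne_zero (NeZero.ne n)
  have hmul : k * (n - 1) + k = k * n := by
    rw [← Nat.mul_succ]; congr 1; omega
  unfold cyclicPairing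
  rw [← Equiv.sum_comp (finProdFinEquiv.trans (finCongr (Nat.mul_comm n k))), Fintype.sum_prod_type]
  refine Finset.sum_congr rfl fun i _ => ?_
  have hval : ∀ t : Fin k,
      (((finProdFinEquiv.trans (finCongr (Nat.mul_comm n k))) (i, t) : Fin (k * n)) : ℕ)
        = t.val + k * i.val := fun t => rfl
  have hdiv : ∀ t : ℕ, t < k → (t + k * i.val) / k = i.val := fun t ht => by
    rw [Nat.add_mul_div_left _ _ hk, Nat.div_eq_of_lt ht, Nat.zero_add]
  have hbound : k * i.val ≤ k * (n - 1) := Nat.mul_le_mul_left k (by omega)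
  rw [Fintype.sum_eq_single (⟨k - 1, by omega⟩ : Fin k)]
  · -- the boundary term
    set j : Fin (k * n) := (finProdFinEquiv.trans (finCongr (Nat.mul_comm n k))) (i, ⟨k - 1, by omega⟩)
    have hj : (j : ℕ) = (k - 1) + k * i.val := hval _
    have hj1 : ((j + 1 : Fin (k * n)) : ℕ) = k * ((i.val + 1) % n) := by
      rw [val_add_one_mod, hj]
      have : k - 1 + k * i.val + 1 = k * (i.val + 1) := by
        rw [Nat.mul_succ]; omega
      rw [this, Nat.mul_mod_mul_left]
    have hi1 : ((i + 1 : Fin n) : ℕ) = (i.val + 1) % n := val_add_one_mod n i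
    show refineMap n k d j * (refineMap n k e j - refineMap n k e (j + 1)) = _
    unfold refineMap
    congr 1
    · congr 1
      refine Fin.ext (show (j : ℕ) / k = i.val from ?_)
      rw [hj]; exact hdiv _ (by omega)
    · congr 1
      · congr 1
        refine Fin.ext (show (j : ℕ) / k = i.val from ?_)
        rw [hj]; exact hdiv _ (by omega)
      · congr 1
        refine Fin.ext (show ((j + 1 : Fin (k * n)) : ℕ) / k = ((i + 1 : Fin n) : ℕ) from ?_)
        rw [hj1, Nat.mul_div_cancel_left _ hk, hi1]
  · -- off-boundary terms vanish
    intro t ht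
    set j : Fin (k * n) := (finProdFinEquiv.trans (finCongr (Nat.mul_comm n k))) (i, t)
    have hj : (j : ℕ) = t.val + k * i.val := hval t
    have htk : t.val < k - 1 := by
      rcases Nat.lt_or_ge t.val (k - 1) with h | h
      · exact h
      · exact absurd (Fin.ext (by omega : t.val = k - 1)) ht
    have hlt : t.val + k * i.val + 1 < k * n := by omega
    have hj1 : ((j + 1 : Fin (k * n)) : ℕ) = t.val + 1 + k * i.val := by
      rw [val_add_one_mod, hj, Nat.mod_eq_of_lt hlt]; omega
    show refineMap n k d j * (refineMap n k e j - refineMap n k e (j + 1)) = 0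
    unfold refineMap
    have h1 : (j : ℕ) / k = i.val := by rw [hj]; exact hdiv _ t.isLt
    have h2 : ((j + 1 : Fin (k * n)) : ℕ) / k = i.val := by
      rw [hj1]; exact hdiv _ (by omega)
    have : e ⟨(j : ℕ) / k, Nat.div_lt_of_lt_mul j.isLt⟩
        = e ⟨((j + 1 : Fin (k * n)) : ℕ) / k, Nat.div_lt_of_lt_mul (j + 1).isLt⟩ := by
      congr 1
      refine Fin.ext (show (j : ℕ) / k = ((j + 1 : Fin (k * n)) : ℕ) / k from ?_)
      rw [h1, h2]
    rw [this, sub_self, mul_zero]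

/-- for all `r, s ∈ ℤ` and `d, e : Fin n → ℤ`, the Euler form of genus `g`
is preserved under the refinement map: `⟨(r, Φd),(s, Φe)⟩_{kn} = ⟨(r,d),(s,e)⟩_n`. -/
theorem eulerForm_refineMap (g : ℤ) (n k : ℕ) [NeZero n] [NeZero k] [NeZero (k * n)]
    (r s : ℤ) (d e : Fin n → ℤ) :
    eulerForm g (k * n) r s (refineMap n k d) (refineMap n k e) = eulerForm g n r s d e := by
  have hk : 0 < k := Nat.pos_of_ne_zero (NeZero.ne k)
  have hn : 0 < n := Nat.pos_of_ne_zero (NeZero.ne n)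
  have hmul : k * (n - 1) + k = k * n := by
    rw [← Nat.mul_succ]; congr 1; omega
  unfold eulerForm
  rw [cyclicPairing_refine]
  have h0 : refineMap n k e 0 = e 0 := by
    unfold refineMap
    congr 1
    exact Fin.ext (by simp)
  have hlast : refineMap n k d
      ⟨k * n - 1, Nat.sub_lt (Nat.pos_of_ne_zero (NeZero.ne (k * n))) Nat.one_pos⟩
      = d ⟨n - 1, Nat.sub_lt hn Nat.one_pos⟩ := by
    unfold refineMap
    congr 1
    refine Fin.ext ?_
    show (k * n - 1) / k = n - 1
    have : k * n - 1 = (k - 1) + k * (n - 1) := by omega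
    rw [this, Nat.add_mul_div_left _ _ hk, Nat.div_eq_of_lt (by omega), Nat.zero_add]
  rw [h0, hlast]
end

section
/- For each positive integer n let G_n be the additive group of functions Fin n → ℤ, and for n ∣ m define Φ_{m,n} : G_n → G_m by (Φ_{m,n} d)_j = d_{⌊j·n/m⌋} (each entry repeated m/n times in order). Then: (i) Φ_{n,n} = id and Φ_{l,m} ∘ Φ_{m,n} = Φ_{l,n} whenever n ∣ m ∣ l, so (G_n, Φ_{m,n}) is a directed system of abelian groups over the positive integers ordered by divisibility; (ii) let S be the additive group of functions f : ℚ → ℤ that are 1-periodic and such that for some n ≥ 1, f is constant on [i/n,(i+1)/n) ∩ ℚ for every 0 ≤ i < n; then the maps G_n → S sending d to f_d, where f_d(x) = d_{⌊n·(x − ⌊x⌋)⌋}, are compatible with the Φ_{m,n} and induce an isomorphism of abelian groups from the direct limit of the system (G_n, Φ_{m,n}) onto S. -/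
/-- The transition map `Φ_{m,n} : (Fin n → ℤ) → (Fin m → ℤ)` for `n ∣ m`, given by
`(Φ_{m,n} d)_j = d_{⌊j·n/m⌋}` (each entry repeated `m/n` times in order). -/
def refineTo {n m : ℕ} (h : n ∣ m) (d : Fin n → ℤ) : Fin m → ℤ := fun j =>
  d ⟨(j : ℕ) * n / m, by
    obtain ⟨k, rfl⟩ := h
    have hj : (j : ℕ) < n * k := j.isLt
    have hn : 0 < n := by
      rcases Nat.eq_zero_or_pos n with h0 | h0
      · subst h0; simp at hj
      · exact h0
    exact Nat.div_lt_of_lt_mul (by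
      calc (j : ℕ) * n < n * k * n := by
            exact Nat.mul_lt_mul_of_lt_of_le hj le_rfl hn
        _ = n * k * n := rfl)⟩

/-- The group of 1-periodic functions `f : ℚ → ℤ` that, for some `n ≥ 1`, are constant on
each interval `[i/n, (i+1)/n) ∩ ℚ`, `0 ≤ i < n`. -/
def IsStepFn (f : ℚ → ℤ) : Prop :=
  (∀ x : ℚ, f (x + 1) = f x) ∧
  ∃ n : ℕ, 0 < n ∧ ∀ i : ℕ, i < n → ∀ x : ℚ,
    (i : ℚ) / n ≤ x → x < ((i : ℚ) + 1) / n → f x = f ((i : ℚ) / n)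

/-- The step function `f_d : ℚ → ℤ`, `f_d(x) = d_{⌊n·(x − ⌊x⌋)⌋}`, attached to
`d : Fin n → ℤ`. -/
def toStepFn {n : ℕ} (hn : 0 < n) (d : Fin n → ℤ) : ℚ → ℤ := fun x =>
  d ⟨(⌊(n : ℚ) * Int.fract x⌋).toNat, by
    have hnq : (0 : ℚ) < n := by exact_mod_cast hn
    have h1 : ⌊(n : ℚ) * Int.fract x⌋ < (n : ℤ) := by
      apply Int.floor_lt.mpr
      push_cast
      nlinarith [Int.fract_nonneg x, Int.fract_lt_one x]
    omega⟩

lemma toStepFn_eval {n : ℕ} (hn : 0 < n) (d : Fin n → ℤ) (x : ℚ) (i : ℕ) (hi : i < n)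
    (h1 : (i : ℚ) / n ≤ x) (h2 : x < ((i : ℚ) + 1) / n) :
    toStepFn hn d x = d ⟨i, hi⟩ := by
  have hnq : (0 : ℚ) < n := by exact_mod_cast hn
  have hx0 : 0 ≤ x := le_trans (by positivity) h1
  have hx1 : x < 1 := lt_of_lt_of_le h2 (by
    rw [div_le_one hnq]; exact_mod_cast hi)
  have hf : Int.fract x = x := Int.fract_eq_self.mpr ⟨hx0, hx1⟩
  have hfl : ⌊(n : ℚ) * Int.fract x⌋ = (i : ℤ) := by
    rw [hf]
    apply Int.floor_eq_iff.mpr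
    constructor
    · push_cast
      calc (i : ℚ) = ((i:ℚ)/n) * n := by field_simp
        _ ≤ x * n := by exact mul_le_mul_of_nonneg_right h1 (le_of_lt hnq)
        _ = n * x := mul_comm _ _
    · push_cast
      calc (n : ℚ) * x < n * (((i:ℚ)+1)/n) := by exact mul_lt_mul_of_pos_left h2 hnq
        _ = (i:ℚ) + 1 := by field_simp
  simp only [toStepFn, hfl, Int.toNat_natCast]

lemma toStepFn_eval_div {n : ℕ} (hn : 0 < n) (d : Fin n → ℤ) (i : Fin n) :
    toStepFn hn d ((i : ℚ) / n) = d i := by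
  have hnq : (0 : ℚ) < n := by exact_mod_cast hn
  have := toStepFn_eval hn d ((i : ℚ) / n) i i.isLt le_rfl
    (by apply div_lt_div_of_pos_right ?_ hnq; linarith)
  simpa using this

lemma toStepFn_refineTo {n m : ℕ} (hn : 0 < n) (hm : 0 < m) (h : n ∣ m) (d : Fin n → ℤ) :
    toStepFn hm (refineTo h d) = toStepFn hn d := by
  obtain ⟨a, rfl⟩ := h
  have ha : 0 < a := Nat.pos_of_ne_zero (by rintro rfl; simp at hm)
  funext x
  set t := Int.fract x with ht
  have ht0 : 0 ≤ t := Int.fract_nonneg x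
  have ht1 : t < 1 := Int.fract_lt_one x
  simp only [toStepFn, refineTo]
  congr 1
  apply Fin.ext
  simp only
  set j : ℕ := (⌊((n*a : ℕ) : ℚ) * t⌋).toNat with hj
  set k : ℕ := (⌊(n : ℚ) * t⌋).toNat with hk
  have hkfl : (k : ℤ) = ⌊(n : ℚ) * t⌋ := by
    rw [hk]; exact Int.toNat_of_nonneg (Int.floor_nonneg.mpr (by positivity))
  have hjfl : (j : ℤ) = ⌊((n*a : ℕ) : ℚ) * t⌋ := by
    rw [hj]; exact Int.toNat_of_nonneg (Int.floor_nonneg.mpr (by positivity))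
  have hkle : (k : ℚ) ≤ n * t := by
    have := Int.floor_le ((n : ℚ) * t); rw [← hkfl] at this; exact_mod_cast this
  have hklt : (n : ℚ) * t < k + 1 := by
    have := Int.lt_floor_add_one ((n : ℚ) * t); rw [← hkfl] at this; exact_mod_cast this
  have hjle : (j : ℚ) ≤ ((n*a : ℕ) : ℚ) * t := by
    have := Int.floor_le (((n*a : ℕ) : ℚ) * t); rw [← hjfl] at this; exact_mod_cast this
  have hjlt : ((n*a : ℕ) : ℚ) * t < j + 1 := by
    have := Int.lt_floor_add_one (((n*a : ℕ) : ℚ) * t); rw [← hjfl] at this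
    exact_mod_cast this
  have h1 : k * a ≤ j := by
    have hq : ((k * a : ℕ) : ℚ) < ((j + 1 : ℕ) : ℚ) := by
      push_cast
      calc (k : ℚ) * a ≤ (n * t) * a := by
            apply mul_le_mul_of_nonneg_right hkle (by positivity)
        _ = ((n*a : ℕ) : ℚ) * t := by push_cast; ring
        _ < j + 1 := hjlt
    have := Nat.cast_lt (α := ℚ) |>.mp hq
    omega
  have h2 : j < (k + 1) * a := by
    have hq : ((j : ℕ) : ℚ) < (((k+1) * a : ℕ) : ℚ) := by
      push_cast
      calc (j : ℚ) ≤ ((n*a : ℕ) : ℚ) * t := hjle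
        _ = (n * t) * a := by push_cast; ring
        _ < (k + 1) * a := by
            apply mul_lt_mul_of_pos_right hklt (by positivity)
    exact_mod_cast hq
  have hdiv : j * n / (n * a) = j / a := by
    rw [mul_comm j n, Nat.mul_div_mul_left _ _ hn]
  rw [hdiv]
  exact Nat.div_eq_of_lt_le h1 h2

lemma periodic_fract_eq {f : ℚ → ℤ} (hp : ∀ x : ℚ, f (x + 1) = f x) (x : ℚ) :
    f x = f (Int.fract x) := by
  have hper : Function.Periodic f 1 := hp
  have := hper.sub_int_mul_eq (x := x) ⌊x⌋
  simp only [mul_one] at this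
  rw [Int.fract]
  rw [← this]

/-- (i) the maps `Φ_{m,n}` form a directed system of abelian groups
`G_n = (Fin n → ℤ)` over the positive integers ordered by divisibility; (ii) the maps
`d ↦ f_d` into the group of periodic step functions `ℚ → ℤ` are additive, compatible with
the transition maps, and induce an isomorphism of the direct limit onto that group
(expressed concretely: joint injectivity in the limit and joint surjectivity). -/
theorem directLimit_step_functions :
    -- (i) directed system
    (∀ n : ℕ, 0 < n → ∀ d : Fin n → ℤ, refineTo (dvd_refl n) d = d) ∧
    (∀ n m l : ℕ, ∀ hnm : n ∣ m, ∀ hml : m ∣ l, ∀ d : Fin n → ℤ,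
      refineTo hml (refineTo hnm d) = refineTo (hnm.trans hml) d) ∧
    (∀ n m : ℕ, ∀ h : n ∣ m, ∀ d e : Fin n → ℤ,
      refineTo h (d + e) = refineTo h d + refineTo h e) ∧
    -- (ii) the maps d ↦ f_d
    (∀ n : ℕ, ∀ hn : 0 < n, ∀ d e : Fin n → ℤ,
      toStepFn hn (d + e) = toStepFn hn d + toStepFn hn e) ∧
    (∀ n : ℕ, ∀ hn : 0 < n, ∀ d : Fin n → ℤ, IsStepFn (toStepFn hn d)) ∧
    (∀ n m : ℕ, ∀ hn : 0 < n, ∀ hm : 0 < m, ∀ h : n ∣ m, ∀ d : Fin n → ℤ,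
      toStepFn hm (refineTo h d) = toStepFn hn d) ∧
    (∀ n m : ℕ, ∀ hn : 0 < n, ∀ hm : 0 < m, ∀ d : Fin n → ℤ, ∀ e : Fin m → ℤ,
      toStepFn hn d = toStepFn hm e →
        ∃ l : ℕ, ∃ _ : 0 < l, ∃ h1 : n ∣ l, ∃ h2 : m ∣ l, refineTo h1 d = refineTo h2 e) ∧
    (∀ f : ℚ → ℤ, IsStepFn f → ∃ n : ℕ, ∃ hn : 0 < n, ∃ d : Fin n → ℤ, toStepFn hn d = f) := by
  refine ⟨?_, ?_, ?_, ?_, ?_, ?_, ?_, ?_⟩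
  · -- identity
    intro n hn d
    funext j
    simp only [refineTo]
    congr 1
    apply Fin.ext
    simp [Nat.mul_div_cancel _ hn]
  · -- transitivity
    intro n m l hnm hml d
    funext j
    rcases Nat.eq_zero_or_pos l with hl | hl
    · subst hl; exact absurd j.isLt (by omega)
    have hm : 0 < m := Nat.pos_of_dvd_of_pos hml hl
    have hn : 0 < n := Nat.pos_of_dvd_of_pos hnm hm
    obtain ⟨a, rfl⟩ := hnm
    obtain ⟨b, rfl⟩ := hml
    simp only [refineTo]
    congr 1
    apply Fin.ext
    simp only
    have hna : 0 < n * a := by positivity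
    generalize (j : ℕ) = jv
    have e1 : jv * (n * a) / (n * a * b) = jv / b := by
      rw [mul_comm jv (n*a), Nat.mul_div_mul_left _ _ hna]
    have e2 : (jv / b) * n / (n * a) = jv / b / a := by
      rw [mul_comm _ n, Nat.mul_div_mul_left _ _ hn]
    have e3 : jv * n / (n * a * b) = jv / (a * b) := by
      rw [mul_comm jv n, mul_assoc, Nat.mul_div_mul_left _ _ hn]
    rw [e1, e2, e3, Nat.div_div_eq_div_mul, mul_comm b a]
  · -- additivity refineTo
    intro n m h d e
    funext j
    rfl
  · -- additivity toStepFn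
    intro n hn d e
    funext x
    rfl
  · -- IsStepFn
    intro n hn d
    constructor
    · intro x
      simp only [toStepFn, Int.fract_add_one]
    · refine ⟨n, hn, ?_⟩
      intro i hi x hx1 hx2
      rw [toStepFn_eval hn d x i hi hx1 hx2,
        toStepFn_eval_div hn d ⟨i, hi⟩]
  · intro n m hn hm h d
    exact toStepFn_refineTo hn hm h d
  · -- joint injectivity
    intro n m hn hm d e heq
    refine ⟨n * m, ⟨by positivity, ⟨Dvd.intro m rfl, Dvd.intro_left n rfl, ?_⟩⟩⟩
    have hl : 0 < n * m := by positivity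
    have h1 : toStepFn hl (refineTo (Dvd.intro m rfl) d) = toStepFn hl (refineTo (Dvd.intro_left n rfl) e) := by
      rw [toStepFn_refineTo hn hl _ d, toStepFn_refineTo hm hl _ e, heq]
    funext i
    have := congrFun h1 ((i : ℚ) / ((n * m : ℕ) : ℚ))
    rwa [toStepFn_eval_div hl _ i, toStepFn_eval_div hl _ i] at this
  · -- surjectivity
    intro f hf
    obtain ⟨hper, n, hn, hstep⟩ := hf
    refine ⟨n, hn, fun i => f ((i : ℚ) / n), ?_⟩
    funext x
    rw [periodic_fract_eq hper x]
    set t := Int.fract x with ht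
    have ht0 : 0 ≤ t := Int.fract_nonneg x
    have ht1 : t < 1 := Int.fract_lt_one x
    have hnq : (0 : ℚ) < n := by exact_mod_cast hn
    set i : ℕ := (⌊(n : ℚ) * t⌋).toNat with hi
    have hifl : (i : ℤ) = ⌊(n : ℚ) * t⌋ := by
      rw [hi]; exact Int.toNat_of_nonneg (Int.floor_nonneg.mpr (by positivity))
    have hile : (i : ℚ) ≤ n * t := by
      have := Int.floor_le ((n : ℚ) * t); rw [← hifl] at this; exact_mod_cast this
    have hilt : (n : ℚ) * t < i + 1 := by
      have := Int.lt_floor_add_one ((n : ℚ) * t); rw [← hifl] at this; exact_mod_cast this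
    have hiltn : i < n := by
      have : (i : ℚ) < n := lt_of_le_of_lt hile (by nlinarith)
      exact_mod_cast this
    have hx1 : (i : ℚ) / n ≤ t := by
      rw [div_le_iff₀ hnq]; linarith [hile]
    have hx2 : t < ((i : ℚ) + 1) / n := by
      rw [lt_div_iff₀ hnq]; linarith [hilt]
    have h2 : toStepFn hn (fun i : Fin n => f ((i : ℚ) / n)) x
        = toStepFn hn (fun i : Fin n => f ((i : ℚ) / n)) t := by
      simp only [toStepFn, ht, Int.fract_fract]
    rw [h2, toStepFn_eval hn _ t i hiltn hx1 hx2]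
    exact (hstep i hiltn t hx1 hx2).symm
end

section
/- For reals a < b with b − a < 1, let χ_{a,b} : ℝ → ℤ be the 1-periodic indicator χ_{a,b}(x) = 1 if {x − a} < b − a and 0 otherwise, where {t} := t − ⌊t⌋. Then: (i) for every x ∈ ℝ there is δ > 0 such that χ_{a,b} is constant on [x, x+δ) with value χ_{a,b}(x), and constant on (x−δ, x) with value χ⁻_{a,b}(x) := 1 if 0 < {x − a} ≤ b − a and 0 otherwise; (ii) for reals a < b, c < d with b − a < 1 and d − c < 1, the function x ↦ χ⁻_{a,b}(x)·(χ⁻_{c,d}(x) − χ_{c,d}(x)) vanishes at every x ∈ [0,1) with x ≢ c and x ≢ d (mod ℤ), and ⟨χ_{a,b}, χ_{c,d}⟩ := Σ_{x ∈ [0,1)} χ⁻_{a,b}(x)·(χ⁻_{c,d}(x) − χ_{c,d}(x)) = 𝟙[0 < {d−a} ≤ b−a] − 𝟙[0 < {c−a} ≤ b−a]; (iii) consequently the symmetrized pairing satisfies (χ_{a,b}, χ_{c,d}) := ⟨χ_{a,b}, χ_{c,d}⟩ + ⟨χ_{c,d}, χ_{a,b}⟩ = 𝟙[a ≡ c] +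 𝟙[b ≡ d] − 𝟙[a ≡ d] − 𝟙[b ≡ c], where x ≡ y means x − y ∈ ℤ. -/
open scoped Classical

/-- The 1-periodic indicator `χ_{a,b}(x) = 1` iff `{x − a} < b − a` (for `a < b`, `b − a < 1`). -/
noncomputable def chiInd (a b : ℝ) (x : ℝ) : ℤ :=
  if Int.fract (x - a) < b - a then 1 else 0

/-- The left-limit `χ⁻_{a,b}(x) = 1` iff `0 < {x − a} ≤ b − a`. -/
noncomputable def chiIndL (a b : ℝ) (x : ℝ) : ℤ :=
  if 0 < Int.fract (x - a) ∧ Int.fract (x - a) ≤ b - a then 1 else 0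

/-- `x ≡ y` means `x − y ∈ ℤ`. -/
def IntCongr (x y : ℝ) : Prop := ∃ k : ℤ, x - y = (k : ℝ)

lemma fract_pin (x : ℝ) (k : ℤ) (h0 : 0 ≤ x - k) (h1 : x - k < 1) : Int.fract x = x - k := by
  rw [← Int.fract_sub_intCast x k, Int.fract_eq_self.mpr ⟨h0, h1⟩]

lemma pin0 (x : ℝ) (h0 : 0 ≤ x) (h1 : x < 1) : Int.fract x = x := Int.fract_eq_self.mpr ⟨h0, h1⟩
lemma pinm1 (x : ℝ) (h0 : -1 ≤ x) (h1 : x < 0) : Int.fract x = x + 1 := by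
  have := fract_pin x (-1) (by push_cast; linarith) (by push_cast; linarith)
  push_cast at this; linarith

lemma fract_eq_zero_iff_le (x : ℝ) : Int.fract x = 0 ↔ Int.fract x ≤ 0 :=
  ⟨le_of_eq, fun h => le_antisymm h (Int.fract_nonneg _)⟩

lemma pin1 (x : ℝ) (h0 : 1 ≤ x) (h1 : x < 2) : Int.fract x = x - 1 := by
  have := fract_pin x 1 (by push_cast; linarith) (by push_cast; linarith); push_cast at this
  linarith

lemma pinm2 (x : ℝ) (h0 : -2 ≤ x) (h1 : x < -1) : Int.fract x = x + 2 := by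
  have := fract_pin x (-2) (by push_cast; linarith) (by push_cast; linarith)
  push_cast at this; linarith

lemma fract_shift (x y : ℝ) : Int.fract (x + y) = Int.fract (Int.fract x + y) := by
  conv_lhs => rw [← Int.fract_add_floor x]
  rw [add_right_comm, Int.fract_add_intCast]

lemma fract_shift' (x y : ℝ) : Int.fract (y - x) = Int.fract (y - Int.fract x) := by
  conv_lhs => rw [← Int.fract_add_floor x]
  rw [show y - (Int.fract x + ⌊x⌋) = y - Int.fract x - ⌊x⌋ by ring, Int.fract_sub_intCast]

lemma intCongr_iff (x y : ℝ) : IntCongr x y ↔ Int.fract (x - y) = 0 := by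
  constructor
  · rintro ⟨k, hk⟩; rw [hk, Int.fract_intCast]
  · intro h
    exact ⟨⌊x - y⌋, by have := Int.fract_add_floor (x - y); rw [h, zero_add] at this
                       exact this.symm⟩

lemma part_i (a b : ℝ) (hab : a < b) (hb1 : b - a < 1) (x : ℝ) : ∃ δ > (0 : ℝ),
    (∀ y, x ≤ y → y < x + δ → chiInd a b y = chiInd a b x) ∧
    (∀ y, x - δ < y → y < x → chiInd a b y = chiIndL a b x) := by
  have hf0 := Int.fract_nonneg (x - a)
  have hf1 := Int.fract_lt_one (x - a)
  have key : ∀ y : ℝ, Int.fract (y - a) = Int.fract (Int.fract (x - a) + (y - x)) := fun y => by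
    rw [show y - a = (x - a) + (y - x) by ring, fract_shift]
  set f := Int.fract (x - a) with hfdef
  rcases hf0.eq_or_lt' with h0 | h0
  · -- f = 0
    refine ⟨min (b - a) (1 - (b - a)), lt_min (by linarith) (by linarith), fun y hy1 hy2 => ?_, fun y hy1 hy2 => ?_⟩
    · have h2 : y - x < min (b - a) (1 - (b - a)) := by linarith
      have hm1 : min (b - a) (1 - (b - a)) ≤ b - a := min_le_left _ _
      have hm2 : min (b - a) (1 - (b - a)) ≤ 1 - (b - a) := min_le_right _ _
      have e : Int.fract (y - a) = y - x := by
        rw [key y, h0, zero_add]; exact pin0 _ (by linarith) (by linarith)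
      simp only [chiInd, e, ← hfdef, h0]
      split_ifs <;> linarith
    · have h2 : x - y < min (b - a) (1 - (b - a)) := by linarith
      have hm1 : min (b - a) (1 - (b - a)) ≤ b - a := min_le_left _ _
      have hm2 : min (b - a) (1 - (b - a)) ≤ 1 - (b - a) := min_le_right _ _
      have e : Int.fract (y - a) = y - x + 1 := by
        rw [key y, h0, zero_add]; exact pinm1 _ (by linarith) (by linarith)
      simp only [chiInd, chiIndL, e, ← hfdef, h0, ite_and]
      split_ifs <;> linarith
  · rcases lt_trichotomy f (b - a) with h1 | h1 | h1
    · -- 0 < f < b - a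
      refine ⟨min f (b - a - f), lt_min (by linarith) (by linarith), fun y hy1 hy2 => ?_, fun y hy1 hy2 => ?_⟩
      · have h2 : y - x < min f (b - a - f) := by linarith
        have hm1 : min f (b - a - f) ≤ f := min_le_left _ _
        have hm2 : min f (b - a - f) ≤ b - a - f := min_le_right _ _
        have e : Int.fract (y - a) = f + (y - x) := by
          rw [key y]; exact pin0 _ (by linarith) (by linarith)
        simp only [chiInd, e, ← hfdef]
        split_ifs <;> linarith
      · have h2 : x - y < min f (b - a - f) := by linarith
        have hm1 : min f (b - a - f) ≤ f := min_le_left _ _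
        have hm2 : min f (b - a - f) ≤ b - a - f := min_le_right _ _
        have e : Int.fract (y - a) = f + (y - x) := by
          rw [key y]; exact pin0 _ (by linarith) (by linarith)
        simp only [chiInd, chiIndL, e, ← hfdef, ite_and]
        split_ifs <;> linarith
    · -- f = b - a
      refine ⟨min f (1 - f), lt_min (by linarith) (by linarith), fun y hy1 hy2 => ?_, fun y hy1 hy2 => ?_⟩
      · have h2 : y - x < min f (1 - f) := by linarith
        have hm1 : min f (1 - f) ≤ f := min_le_left _ _
        have hm2 : min f (1 - f) ≤ 1 - f := min_le_right _ _
        have e : Int.fract (y - a) = f + (y - x) := by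
          rw [key y]; exact pin0 _ (by linarith) (by linarith)
        simp only [chiInd, e, ← hfdef]
        split_ifs <;> linarith
      · have h2 : x - y < min f (1 - f) := by linarith
        have hm1 : min f (1 - f) ≤ f := min_le_left _ _
        have hm2 : min f (1 - f) ≤ 1 - f := min_le_right _ _
        have e : Int.fract (y - a) = f + (y - x) := by
          rw [key y]; exact pin0 _ (by linarith) (by linarith)
        simp only [chiInd, chiIndL, e, ← hfdef, ite_and]
        split_ifs <;> linarith
    · -- b - a < f
      refine ⟨min (1 - f) (f - (b - a)), lt_min (by linarith) (by linarith), fun y hy1 hy2 => ?_, fun y hy1 hy2 => ?_⟩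
      · have h2 : y - x < min (1 - f) (f - (b - a)) := by linarith
        have hm1 : min (1 - f) (f - (b - a)) ≤ 1 - f := min_le_left _ _
        have hm2 : min (1 - f) (f - (b - a)) ≤ f - (b - a) := min_le_right _ _
        have e : Int.fract (y - a) = f + (y - x) := by
          rw [key y]; exact pin0 _ (by linarith) (by linarith)
        simp only [chiInd, e, ← hfdef]
        split_ifs <;> linarith
      · have h2 : x - y < min (1 - f) (f - (b - a)) := by linarith
        have hm1 : min (1 - f) (f - (b - a)) ≤ 1 - f := min_le_left _ _
        have hm2 : min (1 - f) (f - (b - a)) ≤ f - (b - a) := min_le_right _ _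
        have e : Int.fract (y - a) = f + (y - x) := by
          rw [key y]; exact pin0 _ (by linarith) (by linarith)
        simp only [chiInd, chiIndL, e, ← hfdef, ite_and]
        split_ifs <;> linarith

lemma fract_congr_sub (u v : ℝ) : Int.fract (Int.fract u - v) = Int.fract (u - v) := by
  conv_rhs => rw [← Int.fract_add_floor u]
  rw [show Int.fract u + ⌊u⌋ - v = Int.fract u - v + ⌊u⌋ by ring, Int.fract_add_intCast]

lemma part_ii (a b c d : ℝ) (hab : a < b) (hb1 : b - a < 1) (hcd : c < d) (hd1 : d - c < 1) :
    (∀ x : ℝ, 0 ≤ x → x < 1 → ¬ IntCongr x c → ¬ IntCongr x d →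
      chiIndL a b x * (chiIndL c d x - chiInd c d x) = 0) ∧
    (∑ᶠ x ∈ Set.Ico (0 : ℝ) 1, chiIndL a b x * (chiIndL c d x - chiInd c d x)) =
      (if 0 < Int.fract (d - a) ∧ Int.fract (d - a) ≤ b - a then 1 else 0) -
      (if 0 < Int.fract (c - a) ∧ Int.fract (c - a) ≤ b - a then 1 else 0) := by
  have vanish : ∀ x : ℝ, ¬ IntCongr x c → ¬ IntCongr x d →
      chiIndL a b x * (chiIndL c d x - chiInd c d x) = 0 := by
    intro x hc hd
    rw [intCongr_iff] at hc hd
    have hc' : 0 < Int.fract (x - c) := (Int.fract_nonneg _).lt_of_ne (Ne.symm hc)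
    have hne : Int.fract (x - c) ≠ d - c := by
      intro h
      apply hd
      have : x - d = (⌊x - c⌋ : ℝ) := by
        have := Int.fract_add_floor (x - c); rw [h] at this; linarith
      rw [this, Int.fract_intCast]
    rcases hne.lt_or_gt with h | h
    · have e0 : chiIndL c d x = chiInd c d x := by
        unfold chiIndL chiInd
        rw [if_pos ⟨hc', h.le⟩, if_pos h]
      rw [e0, sub_self, mul_zero]
    · have e1 : chiIndL c d x = 0 := by
        unfold chiIndL; rw [if_neg]; rintro ⟨-, h2⟩; linarith
      have e2 : chiInd c d x = 0 := by
        unfold chiInd; rw [if_neg]; intro h2; linarith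
      rw [e1, e2, sub_self, mul_zero]
  refine ⟨fun x _ _ => vanish x, ?_⟩
  set p := Int.fract c with hp
  set q := Int.fract d with hq
  have hdc : Int.fract (d - c) = d - c := pin0 _ (by linarith) hd1
  have hpq : p ≠ q := by
    intro h
    have h2 : Int.fract (d - c) = 0 := by
      have e3 : d - c = ((⌊d⌋ - ⌊c⌋ : ℤ) : ℝ) := by
        have e1 := Int.fract_add_floor c
        have e2 := Int.fract_add_floor d
        rw [← hp] at e1; rw [← hq] at e2
        push_cast
        rw [h] at e1
        linarith
      rw [e3, Int.fract_intCast]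
    rw [hdc] at h2; linarith
  have congr_eq : ∀ x y : ℝ, 0 ≤ x → x < 1 → IntCongr x y → x = Int.fract y := by
    intro x y h0 h1 ⟨k, hk⟩
    have : x = y + k := by linarith
    rw [← pin0 x h0 h1, this, Int.fract_add_intCast]
  -- the congruence classes of p, q
  have hpc : IntCongr p c := ⟨-⌊c⌋, by rw [hp, Int.fract]; push_cast; ring⟩
  have hqd : IntCongr q d := ⟨-⌊d⌋, by rw [hq, Int.fract]; push_cast; ring⟩
  have hsum := finsum_mem_eq_sum_of_inter_support_eq
    (f := fun x => chiIndL a b x * (chiIndL c d x - chiInd c d x))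
    (s := Set.Ico (0:ℝ) 1) (t := ({p, q} : Finset ℝ)) ?_
  · rw [hsum, Finset.sum_pair hpq]
    -- compute the two values
    have fpc : Int.fract (p - c) = 0 := by
      rw [hp, show Int.fract c - c = -(⌊c⌋:ℝ) by rw [Int.fract]; ring]
      rw [show -(⌊c⌋:ℝ) = ((-⌊c⌋ : ℤ) : ℝ) by push_cast; ring, Int.fract_intCast]
    have fqc : Int.fract (q - c) = d - c := by
      rw [hq, show Int.fract d - c = d - c - (⌊d⌋:ℝ) by rw [Int.fract]; ring,
        Int.fract_sub_intCast, hdc]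
    have fpa : Int.fract (p - a) = Int.fract (c - a) := by
      rw [hp, show Int.fract c - a = c - a - (⌊c⌋:ℝ) by rw [Int.fract]; ring,
        Int.fract_sub_intCast]
    have fqa : Int.fract (q - a) = Int.fract (d - a) := by
      rw [hq, show Int.fract d - a = d - a - (⌊d⌋:ℝ) by rw [Int.fract]; ring,
        Int.fract_sub_intCast]
    have v1 : chiIndL c d p = 0 := by
      unfold chiIndL; rw [fpc, if_neg]; rintro ⟨h1, -⟩; exact lt_irrefl _ h1
    have v2 : chiInd c d p = 1 := by
      unfold chiInd; rw [fpc, if_pos]; linarith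
    have v3 : chiIndL c d q = 1 := by
      unfold chiIndL; rw [fqc, if_pos]; exact ⟨by linarith, le_refl _⟩
    have v4 : chiInd c d q = 0 := by
      unfold chiInd; rw [fqc, if_neg]; exact lt_irrefl _
    have v5 : chiIndL a b p = if 0 < Int.fract (c - a) ∧ Int.fract (c - a) ≤ b - a
        then 1 else 0 := by unfold chiIndL; rw [fpa]
    have v6 : chiIndL a b q = if 0 < Int.fract (d - a) ∧ Int.fract (d - a) ≤ b - a
        then 1 else 0 := by unfold chiIndL; rw [fqa]
    rw [v1, v2, v3, v4, v5, v6]; ring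
  · ext x
    simp only [Set.mem_inter_iff, Function.mem_support, Set.mem_Ico, Finset.coe_insert,
      Finset.coe_singleton, Set.mem_insert_iff, Set.mem_singleton_iff]
    constructor
    · rintro ⟨⟨h0, h1⟩, hne⟩
      refine ⟨?_, hne⟩
      by_contra hx
      push_neg at hx
      obtain ⟨hx1, hx2⟩ := hx
      exact hne (vanish x (fun h => hx1 (congr_eq x c h0 h1 h))
        (fun h => hx2 (congr_eq x d h0 h1 h)))
    · rintro ⟨h1 | h1, hne⟩ <;> subst h1
      · exact ⟨⟨Int.fract_nonneg _, Int.fract_lt_one _⟩, hne⟩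
      · exact ⟨⟨Int.fract_nonneg _, Int.fract_lt_one _⟩, hne⟩

set_option maxHeartbeats 2000000 in
lemma key (α γ t : ℝ) (hα0 : 0 < α) (hα1 : α < 1) (hγ0 : 0 < γ) (hγ1 : γ < 1)
    (ht0 : 0 ≤ t) (ht1 : t < 1) :
    ((if 0 < Int.fract (t + γ) ∧ Int.fract (t + γ) ≤ α then 1 else 0) -
      (if 0 < t ∧ t ≤ α then 1 else 0) : ℤ) +
    ((if 0 < Int.fract (α - t) ∧ Int.fract (α - t) ≤ γ then 1 else 0) -
      (if 0 < Int.fract (-t) ∧ Int.fract (-t) ≤ γ then 1 else 0)) =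
    (if Int.fract (-t) = 0 then 1 else 0) + (if Int.fract (α - γ - t) = 0 then 1 else 0) -
    (if Int.fract (t + γ) = 0 then 1 else 0) - (if Int.fract (α - t) = 0 then 1 else 0) := by
  simp only [fract_eq_zero_iff_le, ite_and]
  rcases ht0.eq_or_lt' with h0 | h0
  · -- t = 0
    subst h0
    have E1 : Int.fract ((0:ℝ) + γ) = γ := by rw [zero_add]; exact pin0 _ hγ0.le hγ1
    have E2 : Int.fract (-(0:ℝ)) = 0 := by norm_num
    have E3 : Int.fract (α - 0) = α := by rw [sub_zero]; exact pin0 _ hα0.le hα1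
    rw [E1, E2, E3]
    rcases le_or_gt γ α with h | h
    · have E4 : Int.fract (α - γ - 0) = α - γ := by
        rw [sub_zero]; exact pin0 _ (by linarith) (by linarith)
      rw [E4]
      simp only [hγ0, hα0, lt_self_iff_false, le_refl, hγ0.le, if_true, if_false,
        show ¬(γ ≤ (0:ℝ)) from by linarith, show ¬(α ≤ (0:ℝ)) from by linarith]
      split_ifs <;> linarith
    · have E4 : Int.fract (α - γ - 0) = α - γ + 1 := by
        rw [sub_zero]; exact pinm1 _ (by linarith) (by linarith)
      rw [E4]
      simp only [hγ0, hα0, lt_self_iff_false, le_refl, hγ0.le, if_true, if_false,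
        show ¬(γ ≤ (0:ℝ)) from by linarith, show ¬(α ≤ (0:ℝ)) from by linarith,
        show ¬(α - γ + 1 ≤ (0:ℝ)) from by linarith]
      split_ifs <;> linarith
  · -- 0 < t
    have E2 : Int.fract (-t) = 1 - t := by
      have := pinm1 (-t) (by linarith) (by linarith); linarith
    rw [E2]
    rcases lt_or_ge (t + γ) 1 with h1 | h1
    · have E1 : Int.fract (t + γ) = t + γ := pin0 _ (by linarith) h1
      rw [E1]
      rcases le_or_gt t α with h2 | h2
      · have E3 : Int.fract (α - t) = α - t := pin0 _ (by linarith) (by linarith)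
        rw [E3]
        rcases le_or_gt 0 (α - γ - t) with h3 | h3
        · rw [pin0 (α - γ - t) h3 (by linarith)]
          simp only [h0, h2, show (0:ℝ) < t + γ from by linarith, show (0:ℝ) < 1 - t from by linarith,
            show ¬(1 - t ≤ (0:ℝ)) from by linarith, show ¬(t + γ ≤ (0:ℝ)) from by linarith,
            if_true, if_false]
          split_ifs <;> linarith
        · rcases le_or_gt (-1) (α - γ - t) with h4 | h4
          · rw [pinm1 (α - γ - t) h4 h3]
            simp only [h0, h2, show (0:ℝ) < t + γ from by linarith, show (0:ℝ) < 1 - t from by linarith,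
              show ¬(1 - t ≤ (0:ℝ)) from by linarith, show ¬(t + γ ≤ (0:ℝ)) from by linarith, if_true, if_false]
            split_ifs <;> linarith
          · rw [pinm2 (α - γ - t) (by linarith) h4]
            simp only [h0, h2, show (0:ℝ) < t + γ from by linarith, show (0:ℝ) < 1 - t from by linarith,
              show ¬(1 - t ≤ (0:ℝ)) from by linarith, show ¬(t + γ ≤ (0:ℝ)) from by linarith,
              show ¬(α - γ - t + 2 ≤ (0:ℝ)) from by linarith, if_true, if_false]
            split_ifs <;> linarith
      · have E3 : Int.fract (α - t) = α - t + 1 := pinm1 _ (by linarith) (by linarith)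
        rw [E3]
        rcases le_or_gt (-1) (α - γ - t) with h4 | h4
        · rw [pinm1 (α - γ - t) h4 (by linarith)]
          simp only [h0, show ¬(t ≤ α) from not_le.mpr h2, show (0:ℝ) < t + γ from by linarith,
            show (0:ℝ) < 1 - t from by linarith, show (0:ℝ) < α - t + 1 from by linarith,
            show ¬(1 - t ≤ (0:ℝ)) from by linarith, show ¬(t + γ ≤ (0:ℝ)) from by linarith,
            show ¬(α - t + 1 ≤ (0:ℝ)) from by linarith, if_true, if_false]
          split_ifs <;> linarith
        · rw [pinm2 (α - γ - t) (by linarith) h4]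
          simp only [h0, show ¬(t ≤ α) from not_le.mpr h2, show (0:ℝ) < t + γ from by linarith,
            show (0:ℝ) < 1 - t from by linarith, show (0:ℝ) < α - t + 1 from by linarith,
            show ¬(1 - t ≤ (0:ℝ)) from by linarith, show ¬(t + γ ≤ (0:ℝ)) from by linarith,
            show ¬(α - t + 1 ≤ (0:ℝ)) from by linarith,
            show ¬(α - γ - t + 2 ≤ (0:ℝ)) from by linarith, if_true, if_false]
          split_ifs <;> linarith
    · have E1 : Int.fract (t + γ) = t + γ - 1 := pin1 _ h1 (by linarith)
      rw [E1]
      rcases le_or_gt t α with h2 | h2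
      · have E3 : Int.fract (α - t) = α - t := pin0 _ (by linarith) (by linarith)
        rw [E3]
        rcases le_or_gt 0 (α - γ - t) with h3 | h3
        · rw [pin0 (α - γ - t) h3 (by linarith)]
          simp only [h0, h2, show (0:ℝ) < 1 - t from by linarith,
            show ¬(1 - t ≤ (0:ℝ)) from by linarith, if_true, if_false]
          split_ifs <;> linarith
        · rcases le_or_gt (-1) (α - γ - t) with h4 | h4
          · rw [pinm1 (α - γ - t) h4 h3]
            simp only [h0, h2, show (0:ℝ) < 1 - t from by linarith,
              show ¬(1 - t ≤ (0:ℝ)) from by linarith, if_true, if_false]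
            split_ifs <;> linarith
          · rw [pinm2 (α - γ - t) (by linarith) h4]
            simp only [h0, h2, show (0:ℝ) < 1 - t from by linarith,
              show ¬(1 - t ≤ (0:ℝ)) from by linarith,
              show ¬(α - γ - t + 2 ≤ (0:ℝ)) from by linarith, if_true, if_false]
            split_ifs <;> linarith
      · have E3 : Int.fract (α - t) = α - t + 1 := pinm1 _ (by linarith) (by linarith)
        rw [E3]
        rcases le_or_gt (-1) (α - γ - t) with h4 | h4
        · rw [pinm1 (α - γ - t) h4 (by linarith)]
          simp only [h0, show ¬(t ≤ α) from not_le.mpr h2, show (0:ℝ) < 1 - t from by linarith,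
            show (0:ℝ) < α - t + 1 from by linarith,
            show ¬(1 - t ≤ (0:ℝ)) from by linarith,
            show ¬(α - t + 1 ≤ (0:ℝ)) from by linarith, if_true, if_false]
          split_ifs <;> linarith
        · rw [pinm2 (α - γ - t) (by linarith) h4]
          simp only [h0, show ¬(t ≤ α) from not_le.mpr h2, show (0:ℝ) < 1 - t from by linarith,
            show (0:ℝ) < α - t + 1 from by linarith,
            show ¬(1 - t ≤ (0:ℝ)) from by linarith,
            show ¬(α - t + 1 ≤ (0:ℝ)) from by linarith,
            show ¬(α - γ - t + 2 ≤ (0:ℝ)) from by linarith, if_true, if_false]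
          split_ifs <;> linarith

/-- (i) `χ_{a,b}` is right-locally constant with value `χ_{a,b}(x)` and
left-locally constant with value `χ⁻_{a,b}(x)`; (ii) the summand
`χ⁻_{a,b}·(χ⁻_{c,d} − χ_{c,d})` vanishes on `[0,1)` away from `x ≡ c, d (mod ℤ)` and
`⟨χ_{a,b}, χ_{c,d}⟩ = Σ_{x∈[0,1)} χ⁻_{a,b}(x)(χ⁻_{c,d}(x) − χ_{c,d}(x))
 = 𝟙[0<{d−a}≤b−a] − 𝟙[0<{c−a}≤b−a]`; (iii) the symmetrized pairing equals
`𝟙[a≡c] + 𝟙[b≡d] − 𝟙[a≡d] − 𝟙[b≡c]`. -/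
theorem chi_pairing :
    -- (i)
    (∀ a b : ℝ, a < b → b - a < 1 → ∀ x : ℝ, ∃ δ > (0 : ℝ),
      (∀ y, x ≤ y → y < x + δ → chiInd a b y = chiInd a b x) ∧
      (∀ y, x - δ < y → y < x → chiInd a b y = chiIndL a b x)) ∧
    -- (ii)
    (∀ a b c d : ℝ, a < b → b - a < 1 → c < d → d - c < 1 →
      (∀ x : ℝ, 0 ≤ x → x < 1 → ¬ IntCongr x c → ¬ IntCongr x d →
        chiIndL a b x * (chiIndL c d x - chiInd c d x) = 0) ∧
      (∑ᶠ x ∈ Set.Ico (0 : ℝ) 1, chiIndL a b x * (chiIndL c d x - chiInd c d x)) =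
        (if 0 < Int.fract (d - a) ∧ Int.fract (d - a) ≤ b - a then 1 else 0) -
        (if 0 < Int.fract (c - a) ∧ Int.fract (c - a) ≤ b - a then 1 else 0)) ∧
    -- (iii)
    (∀ a b c d : ℝ, a < b → b - a < 1 → c < d → d - c < 1 →
      (∑ᶠ x ∈ Set.Ico (0 : ℝ) 1, chiIndL a b x * (chiIndL c d x - chiInd c d x)) +
      (∑ᶠ x ∈ Set.Ico (0 : ℝ) 1, chiIndL c d x * (chiIndL a b x - chiInd a b x)) =
        (if IntCongr a c then 1 else 0) + (if IntCongr b d then 1 else 0) -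
        (if IntCongr a d then 1 else 0) - (if IntCongr b c then 1 else 0)) := by
  refine ⟨fun a b hab hb1 x => part_i a b hab hb1 x, fun a b c d hab hb1 hcd hd1 => part_ii a b c d hab hb1 hcd hd1, fun a b c d hab hb1 hcd hd1 => ?_⟩
  rw [(part_ii a b c d hab hb1 hcd hd1).2, (part_ii c d a b hcd hd1 hab hb1).2]
  simp only [intCongr_iff]
  have r1 : Int.fract (d - a) = Int.fract (Int.fract (c - a) + (d - c)) := by
    rw [show d - a = (c - a) + (d - c) by ring, fract_shift]
  have r2 : Int.fract (b - c) = Int.fract ((b - a) - Int.fract (c - a)) := by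
    rw [show b - c = (b - a) - (c - a) by ring, fract_shift']
  have r3 : Int.fract (a - c) = Int.fract (-Int.fract (c - a)) := by
    rw [show a - c = 0 - (c - a) by ring, fract_shift', zero_sub]
  have r4 : Int.fract (b - d) = Int.fract ((b - a) - (d - c) - Int.fract (c - a)) := by
    rw [show b - d = (b - a) - (d - c) - (c - a) by ring, fract_shift']
  have r5 : (Int.fract (a - d) = 0) ↔ (Int.fract (Int.fract (c - a) + (d - c)) = 0) := by
    rw [show a - d = -(d - a) by ring, Int.fract_neg_eq_zero, r1]
  rw [r1, r2, r3, r4]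
  simp only [r5]
  exact key (b - a) (d - c) (Int.fract (c - a)) (by linarith) hb1 (by linarith) hd1
    (Int.fract_nonneg _) (Int.fract_lt_one _)
end

section
/- Let K be a field and u ∈ Kˣ a unit; set v = u² (u plays the role of υ^{1/2}). Let M be the free K-module with basis {u⃗_y}_{y ∈ ℝ}. For reals a < b with b − a < 1 define K-linear endomorphisms of M by: E_{a,b}(u⃗_y) = u⁻¹·u⃗_{y+a−b} if a + y ∈ ℤ and 0 otherwise; F_{a,b}(u⃗_y) = u·u⃗_{y+b−a} if b + y ∈ ℤ and 0 otherwise; and K_{a,b}^{±1}(u⃗_y) = v^{±ε(y)}·u⃗_y where ε(y) = 𝟙[b+y ∈ ℤ] − 𝟙[a+y ∈ ℤ]. Then for all a < b with b − a < 1, the relation (v − v⁻¹)·(E_{a,b} ∘ F_{a,b} − F_{a,b} ∘ E_{a,b}) = K_{a,b} − K_{a,b}^{−1} holds as an equality of K-linear endomorphisms of M. -/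
open scoped Classical

/-- The operator `E_{a,b}` on the free module with basis `{u⃗_y}_{y∈ℝ}`:
`E_{a,b}(u⃗_y) = u⁻¹·u⃗_{y+a−b}` if `a + y ∈ ℤ`, and `0` otherwise. -/
noncomputable def Eop {K : Type*} [Field K] (u : Kˣ) (a b : ℝ) :
    (ℝ →₀ K) →ₗ[K] (ℝ →₀ K) :=
  Finsupp.lsum K fun y =>
    if ∃ k : ℤ, a + y = (k : ℝ) then ((u⁻¹ : Kˣ) : K) • Finsupp.lsingle (y + a - b) else 0

/-- The operator `F_{a,b}`: `F_{a,b}(u⃗_y) = u·u⃗_{y+b−a}` if `b + y ∈ ℤ`, and `0` otherwise. -/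
noncomputable def Fop {K : Type*} [Field K] (u : Kˣ) (a b : ℝ) :
    (ℝ →₀ K) →ₗ[K] (ℝ →₀ K) :=
  Finsupp.lsum K fun y =>
    if ∃ k : ℤ, b + y = (k : ℝ) then ((u : K)) • Finsupp.lsingle (y + b - a) else 0

/-- The operator `K_{c,d}^{s}` (for `s = ±1`): `K_{c,d}^{s}(u⃗_y) = v^{s·ε(y)}·u⃗_y`, where
`v = u²` and `ε(y) = 𝟙[d+y ∈ ℤ] − 𝟙[c+y ∈ ℤ]`. -/
noncomputable def Kop {K : Type*} [Field K] (u : Kˣ) (c d : ℝ) (s : ℤ) :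
    (ℝ →₀ K) →ₗ[K] (ℝ →₀ K) :=
  Finsupp.lsum K fun y =>
    ((((u ^ 2) ^ (s * ((if ∃ k : ℤ, d + y = (k : ℝ) then 1 else 0) -
        (if ∃ k : ℤ, c + y = (k : ℝ) then 1 else 0)))) : Kˣ) : K) • Finsupp.lsingle y

/-- the Drinfeld–Jimbo relation
`(v − v⁻¹)·(E_{a,b}∘F_{a,b} − F_{a,b}∘E_{a,b}) = K_{a,b} − K_{a,b}⁻¹` (with `v = u²`) holds
on the fundamental representation, for every strict interval (`a < b`, `b − a < 1`). -/
theorem EF_commutator_eq_K {K : Type*} [Field K] (u : Kˣ) (a b : ℝ)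
    (hab : a < b) (hlen : b - a < 1) :
    ((u : K) ^ 2 - ((u : K) ^ 2)⁻¹) •
        (Eop u a b ∘ₗ Fop u a b - Fop u a b ∘ₗ Eop u a b) =
      Kop u a b 1 - Kop u a b (-1) := by
  apply Finsupp.lhom_ext
  intro y c
  have hPQ : ¬((∃ k : ℤ, a + y = (k : ℝ)) ∧ (∃ k : ℤ, b + y = (k : ℝ))) := by
    rintro ⟨⟨k, hk⟩, ⟨m, hm⟩⟩
    have h1 : (0:ℝ) < ((m - k : ℤ) : ℝ) := by push_cast; linarith
    have h2 : ((m - k : ℤ) : ℝ) < 1 := by push_cast; linarith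
    have h1' : (0:ℤ) < m - k := by exact_mod_cast h1
    have h2' : (m - k : ℤ) < 1 := by exact_mod_cast h2
    omega
  have hiff1 : (∃ k : ℤ, a + (y + b - a) = (k : ℝ)) ↔ (∃ k : ℤ, b + y = (k : ℝ)) :=
    exists_congr fun k => by constructor <;> intro h <;> linarith
  have hiff2 : (∃ k : ℤ, b + (y + a - b) = (k : ℝ)) ↔ (∃ k : ℤ, a + y = (k : ℝ)) :=
    exists_congr fun k => by constructor <;> intro h <;> linarith
  have e1 : y + b - a + a - b = y := by ring
  have e2 : y + a - b + b - a = y := by ring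
  simp only [LinearMap.smul_apply, LinearMap.sub_apply, LinearMap.comp_apply,
    Eop, Fop, Kop, Finsupp.lsum_single]
  by_cases hP : ∃ k : ℤ, a + y = (k : ℝ)
  · have hQ : ¬ ∃ k : ℤ, b + y = (k : ℝ) := fun h => hPQ ⟨hP, h⟩
    simp only [hP, hQ, if_true, if_false, LinearMap.zero_apply, map_zero,
      LinearMap.smul_apply, Finsupp.lsingle_apply, map_smul, Finsupp.lsum_single,
      hiff2, if_true, e1, e2]
    simp only [zero_sub, smul_smul, if_true, mul_one, mul_zero, zero_sub, mul_neg,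
      Units.val_zpow_eq_zpow_val, Units.val_pow_eq_pow_val]
    simp only [zpow_neg, zpow_one, inv_inv, smul_smul, smul_neg, neg_smul, ← sub_smul,
      ← neg_smul]
    simp only [Units.val_inv_eq_inv_val]
    congr 1
    field_simp
    ring
  · by_cases hQ : ∃ k : ℤ, b + y = (k : ℝ)
    · simp only [hP, hQ, if_true, if_false, LinearMap.zero_apply, map_zero,
        LinearMap.smul_apply, Finsupp.lsingle_apply, map_smul, Finsupp.lsum_single,
        hiff1, if_true, e1, e2]
      simp only [sub_zero, smul_smul, mul_one, mul_zero,
        Units.val_zpow_eq_zpow_val, Units.val_pow_eq_pow_val]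
      simp only [zpow_neg, zpow_one, inv_inv, smul_smul, smul_neg, neg_smul, ← sub_smul,
        ← neg_smul]
  
      simp only [Units.val_inv_eq_inv_val]
      congr 1
      field_simp
    · simp [hP, hQ]
end

section
/- Let K be a field and u ∈ Kˣ a unit; set v = u² (u plays the role of υ^{1/2}). Let M be the free K-module with basis {u⃗_y}_{y ∈ ℝ}. For reals c < d with d − c ≤ 1 define K_{c,d}^{±1}(u⃗_y) = v^{±ε(y)}·u⃗_y with ε(y) = 𝟙[d+y ∈ ℤ] − 𝟙[c+y ∈ ℤ], and for reals a < b with b − a < 1 define E_{a,b}(u⃗_y) = u⁻¹·u⃗_{y+a−b} if a + y ∈ ℤ and 0 otherwise, F_{a,b}(u⃗_y) = u·u⃗_{y+b−a} if b + y ∈ ℤ and 0 otherwise. Then: (i) any two of the operators K_{c,d}^{±1} commute; (ii) if c < d < e ≤ c + 1 then K_{c,d} ∘ K_{d,e} = K_{c,e}; (iii) for every interval (c < d ≤ c+1) and every strict interval (a < b < a+1), K_{c,d} ∘ E_{a,b} ∘ K_{c,d}^{−1} = v^{P}·E_{a,b} and K_{c,d} ∘ F_{a,b} ∘ K_{c,d}^{−1}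 = v^{−P}·F_{a,b}, where P = 𝟙[a ≡ c] + 𝟙[b ≡ d] − 𝟙[a ≡ d] − 𝟙[b ≡ c] ∈ ℤ and x ≡ y means x − y ∈ ℤ. -/
open scoped Classical

lemma Kop_single {K : Type*} [Field K] (u : Kˣ) (c d : ℝ) (s : ℤ) (y : ℝ) (x : K) :
    Kop u c d s (Finsupp.single y x) =
      ((((u ^ 2) ^ (s * ((if ∃ k : ℤ, d + y = (k : ℝ) then 1 else 0) -
        (if ∃ k : ℤ, c + y = (k : ℝ) then 1 else 0)))) : Kˣ) : K) • Finsupp.single y x := by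
  simp [Kop, Finsupp.lsum_single]

lemma Eop_single {K : Type*} [Field K] (u : Kˣ) (a b : ℝ) (y : ℝ) (x : K) :
    Eop u a b (Finsupp.single y x) =
      if ∃ k : ℤ, a + y = (k : ℝ) then ((u⁻¹ : Kˣ) : K) • Finsupp.single (y + a - b) x
      else 0 := by
  simp only [Eop, Finsupp.lsum_single]
  split_ifs <;> simp

lemma Fop_single {K : Type*} [Field K] (u : Kˣ) (a b : ℝ) (y : ℝ) (x : K) :
    Fop u a b (Finsupp.single y x) =
      if ∃ k : ℤ, b + y = (k : ℝ) then ((u : K)) • Finsupp.single (y + b - a) x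
      else 0 := by
  simp only [Fop, Finsupp.lsum_single]
  split_ifs <;> simp

lemma shift₁ {a y : ℝ} (h : ∃ k : ℤ, a + y = (k : ℝ)) (c : ℝ) :
    (∃ k : ℤ, c + y = (k : ℝ)) ↔ (∃ k : ℤ, a - c = (k : ℝ)) := by
  obtain ⟨k, hk⟩ := h
  constructor
  · rintro ⟨m, hm⟩; exact ⟨k - m, by push_cast; linarith⟩
  · rintro ⟨m, hm⟩; exact ⟨k - m, by push_cast; linarith⟩

lemma shift₂ {a y : ℝ} (h : ∃ k : ℤ, a + y = (k : ℝ)) (c b : ℝ) :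
    (∃ k : ℤ, c + (y + a - b) = (k : ℝ)) ↔ (∃ k : ℤ, b - c = (k : ℝ)) := by
  obtain ⟨k, hk⟩ := h
  constructor
  · rintro ⟨m, hm⟩; exact ⟨k - m, by push_cast; linarith⟩
  · rintro ⟨m, hm⟩; exact ⟨k - m, by push_cast; linarith⟩

/-- Cartan relations on the fundamental representation: (i) any two of the
operators `K_{c,d}^{±1}` commute; (ii) the join relation `K_{c,d}∘K_{d,e} = K_{c,e}` for
`c < d < e ≤ c + 1`; (iii) `K_{c,d}∘E_{a,b}∘K_{c,d}⁻¹ = v^P·E_{a,b}` and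
`K_{c,d}∘F_{a,b}∘K_{c,d}⁻¹ = v^{−P}·F_{a,b}`, with
`P = 𝟙[a≡c] + 𝟙[b≡d] − 𝟙[a≡d] − 𝟙[b≡c]` (congruence mod ℤ) and `v = u²`. -/
theorem K_relations {K : Type*} [Field K] (u : Kˣ) :
    -- (i)
    (∀ c₁ d₁ c₂ d₂ : ℝ, c₁ < d₁ → d₁ - c₁ ≤ 1 → c₂ < d₂ → d₂ - c₂ ≤ 1 →
      ∀ s t : ℤ, (s = 1 ∨ s = -1) → (t = 1 ∨ t = -1) →
        Kop u c₁ d₁ s ∘ₗ Kop u c₂ d₂ t = Kop u c₂ d₂ t ∘ₗ Kop u c₁ d₁ s) ∧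
    -- (ii)
    (∀ c d e : ℝ, c < d → d < e → e ≤ c + 1 →
      Kop u c d 1 ∘ₗ Kop u d e 1 = Kop u c e 1) ∧
    -- (iii)
    (∀ c d a b : ℝ, c < d → d - c ≤ 1 → a < b → b - a < 1 →
      Kop u c d 1 ∘ₗ Eop u a b ∘ₗ Kop u c d (-1) =
        ((((u ^ 2) ^ (((if ∃ k : ℤ, a - c = (k : ℝ) then 1 else 0) +
            (if ∃ k : ℤ, b - d = (k : ℝ) then 1 else 0) -
            (if ∃ k : ℤ, a - d = (k : ℝ) then 1 else 0) -
            (if ∃ k : ℤ, b - c = (k : ℝ) then 1 else 0) : ℤ))) : Kˣ) : K) • Eop u a b ∧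
      Kop u c d 1 ∘ₗ Fop u a b ∘ₗ Kop u c d (-1) =
        ((((u ^ 2) ^ (-((if ∃ k : ℤ, a - c = (k : ℝ) then 1 else 0) +
            (if ∃ k : ℤ, b - d = (k : ℝ) then 1 else 0) -
            (if ∃ k : ℤ, a - d = (k : ℝ) then 1 else 0) -
            (if ∃ k : ℤ, b - c = (k : ℝ) then 1 else 0) : ℤ))) : Kˣ) : K) • Fop u a b) := by
  refine ⟨?_, ?_, ?_⟩
  · intro c₁ d₁ c₂ d₂ _ _ _ _ s t _ _
    apply Finsupp.lhom_ext
    intro y x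
    simp only [LinearMap.comp_apply, Kop_single, map_smul, smul_smul]
    rw [mul_comm]
  · intro c d e _ _ _
    apply Finsupp.lhom_ext
    intro y x
    simp only [LinearMap.comp_apply, Kop_single, map_smul, smul_smul,
      ← Units.val_mul, ← zpow_add]
    congr 2
    ring_nf
  · intro c d a b _ _ _ _
    constructor
    · apply Finsupp.lhom_ext
      intro y x
      simp only [LinearMap.comp_apply, LinearMap.smul_apply, Kop_single, map_smul, Eop_single]
      by_cases h : ∃ k : ℤ, a + y = (k : ℝ)
      · simp only [h, if_true, map_smul, Kop_single, shift₁ h, shift₂ h, smul_smul]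
        congr 1
        norm_cast
        rw [mul_comm ((u⁻¹ : Kˣ)), ← mul_assoc, ← zpow_add, mul_comm _ (u⁻¹ : Kˣ), mul_comm]
        congr 1
        simp only [Int.subNatNat_eq_coe]
        push_cast
        ring_nf
      · simp [h]
    · apply Finsupp.lhom_ext
      intro y x
      simp only [LinearMap.comp_apply, LinearMap.smul_apply, Kop_single, map_smul, Fop_single]
      by_cases h : ∃ k : ℤ, b + y = (k : ℝ)
      · simp only [h, if_true, map_smul, Kop_single, shift₁ h, shift₂ h, smul_smul]
        congr 1
        norm_cast
        rw [mul_comm (u : Kˣ), ← mul_assoc, ← zpow_add, mul_comm _ (u : Kˣ), mul_comm]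
        congr 1
        simp only [Int.subNatNat_eq_coe]
        push_cast
        ring_nf
      · simp [h]
end
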